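/- The size of the set of primes is eventually smaller than the size of the set of multiples of k, for every k: for every k ≥ 1 there exists m such that for all n > m, Nat.primeCounting n < ((Finset.Icc 1 n).filter (fun j => k ∣ j)).card. -/

import Mathlib

open Finset

lemma pi_le_aux (s n : ℕ) (hs : 0 < s) :
    Nat.primeCounting n ≤ 4 ^ s + 1 + n / s := by
  set S : Finset ℕ := {p ∈ range (n+1) | p.Prime ∧ 4 ^ s < p} with hS
  have hSprod : (4:ℕ) ^ (s * S.card) ≤ 4 ^ n := by
    calc (4:ℕ) ^ (s * S.card) = (4 ^ s) ^ S.card := by rw [pow_mul]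
    _ ≤ ∏ p ∈ S, p :=
        Finset.pow_card_le_prod _ _ _ (fun p hp => le_of_lt (mem_filter.mp hp).2.2)
    _ ≤ primorial n := by
        apply Finset.prod_le_prod_of_subset_of_one_le'
        · intro p hp
          simp only [hS, mem_filter] at hp ⊢
          exact ⟨hp.1, hp.2.1⟩
        · intro p hp _
          exact (mem_filter.mp hp).2.pos
    _ ≤ 4 ^ n := primorial_le_4_pow n
  have hcard : s * S.card ≤ n :=
    (Nat.pow_le_pow_iff_right (by norm_num : 1 < 4)).mp hSprod
  have hScard : S.card ≤ n / s :=
    (Nat.le_div_iff_mul_le hs).mpr (by rwa [mul_comm] at hcard)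
  have hsplit : Nat.primeCounting n ≤ (4 ^ s + 1) + S.card := by
    rw [Nat.primeCounting, Nat.primeCounting', Nat.count_eq_card_filter_range]
    have heq : {p ∈ range (n+1) | p.Prime}
        = {p ∈ range (n+1) | p.Prime ∧ ¬ 4 ^ s < p} ∪ S := by
      rw [hS, ← filter_or]
      apply filter_congr
      intro p _
      tauto
    rw [heq]
    refine (card_union_le _ _).trans (Nat.add_le_add_right ?_ _)
    refine (card_le_card ?_).trans (card_range (4 ^ s + 1)).le
    intro p hp
    rw [mem_filter] at hp
    rw [mem_range]
    omega
  omega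

theorem primes_eventually_fewer_than_multiples (k : ℕ) (hk : 1 ≤ k) :
    ∃ m, ∀ n > m,
      Nat.primeCounting n < ((Finset.Icc 1 n).filter (fun j => k ∣ j)).card := by
  refine ⟨2 * (k * (4 ^ (2 * k) + 1) + k), fun n hn => ?_⟩
  have hcardmul : ((Finset.Icc 1 n).filter (fun j => k ∣ j)).card = n / k := by
    rw [show Finset.Icc 1 n = Finset.Ioc 0 n from rfl]
    exact Nat.Ioc_filter_dvd_card_eq_div n k
  rw [hcardmul]
  have h1 : Nat.primeCounting n ≤ 4 ^ (2 * k) + 1 + n / (2 * k) :=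
    pi_le_aux (2 * k) n (by omega)
  have h2 : (n / (2 * k)) * k ≤ n / 2 := by
    rw [Nat.le_div_iff_mul_le (by norm_num : 0 < 2)]
    calc n / (2 * k) * k * 2 = n / (2 * k) * (2 * k) := by ring
    _ ≤ n := Nat.div_mul_le_self n (2 * k)
  have h3 : (4 ^ (2 * k) + 2) * k ≤ n / 2 := by
    rw [Nat.le_div_iff_mul_le (by norm_num : 0 < 2)]
    nlinarith [hn]
  have h4 : 2 * (n / 2) ≤ n := Nat.mul_div_le n 2
  have hmul : (Nat.primeCounting n + 1) * k ≤ n := by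
    calc (Nat.primeCounting n + 1) * k ≤ (4 ^ (2 * k) + 2 + n / (2 * k)) * k := by
          apply Nat.mul_le_mul_right; omega
    _ = (4 ^ (2 * k) + 2) * k + (n / (2 * k)) * k := by ring
    _ ≤ n / 2 + n / 2 := Nat.add_le_add h3 h2
    _ ≤ n := by omega
  exact Nat.lt_of_succ_le ((Nat.le_div_iff_mul_le (by omega)).mpr hmul)
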